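/- arXiv:2201.11162 — 2 statements merged into one kernel-verified Lean document; each statement's English description precedes it below -/
import Mathlib

section
/- Let Θ be a measurable space (parameter space), Z a measurable space (data space), D a probability measure on Z, and ℓ : Θ × Z → ℝ a measurable loss function with 0 ≤ ℓ(θ,z) ≤ 1 for all θ, z. For θ ∈ Θ define the risk L(θ) = ∫_Z ℓ(θ,z) dD(z), and for a sample (z₁,…,z_m) ∈ Z^m define the empirical risk L_m(θ) = (1/m) Σ_{k=1}^m ℓ(θ,z_k). Fix a probability measure π on Θ (the prior), a real ε > 0, a real λ ∈ (0,2), and an integer m ≥ 1. Then with probability at least 1−ε over i.i.d. samples (z₁,…,z_m) drawn from the m-fold product measure D^{⊗m}, it holds simultaneously for all probability measures μ on Θ (posteriors) that ∫_Θ L(θ) dμ(θ) ≤ (∫_Θ L_m(θ) dμ(θ))/(1−λ/2) + (KL(μ‖π) + log(2√m/ε)) / (m λ (1−λ/2)). -/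
open MeasureTheory


/-- `exp (-x) ≤ 1 - x + x^2/2` for `0 ≤ x`. -/
lemma exp_neg_le_quadratic {x : ℝ} (hx : 0 ≤ x) :
    Real.exp (-x) ≤ 1 - x + x ^ 2 / 2 := by
  set g : ℝ → ℝ := fun y => 1 - y + y ^ 2 / 2 - Real.exp (-y) with hg
  have hder : ∀ y : ℝ, HasDerivAt g (y + Real.exp (-y) - 1) y := by
    intro y
    have h1 : HasDerivAt (fun t : ℝ => 1 - t) (-1) y := (hasDerivAt_id y).const_sub 1
    have h2 : HasDerivAt (fun t : ℝ => t ^ 2 / 2) y y := by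
      simpa using (hasDerivAt_pow 2 y).div_const 2
    have h3 : HasDerivAt (fun t : ℝ => Real.exp (-t)) (-Real.exp (-y)) y := by
      exact ((Real.hasDerivAt_exp (-y)).comp y ((hasDerivAt_id y).neg)).congr_deriv (by simp)
    have := (h1.add h2).sub h3
    exact this.congr_deriv (by ring)
  have hmono : MonotoneOn g (Set.Ici (0 : ℝ)) := by
    refine monotoneOn_of_deriv_nonneg (convex_Ici 0) ?_ ?_ ?_
    · exact (Continuous.sub (by continuity) (Real.continuous_exp.comp continuous_neg)).continuousOn
    · intro y _
      exact ((hder y).differentiableAt).differentiableWithinAt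
    · intro y hy
      rw [(hder y).deriv]
      have h := Real.add_one_le_exp (-y)
      linarith
  have h0 : g 0 = 0 := by simp [hg]
  have := hmono (Set.self_mem_Ici) (Set.mem_Ici.mpr hx) hx
  rw [h0] at this
  simp only [hg] at this
  linarith

/-- Gibbs' inequality: nonnegativity of KL. -/
lemma integral_llr_nonneg' {α : Type*} [MeasurableSpace α] {μ ρ : Measure α}
    [IsProbabilityMeasure μ] [IsProbabilityMeasure ρ] (hac : μ ≪ ρ)
    (hint : Integrable (llr μ ρ) μ) : 0 ≤ ∫ x, llr μ ρ x ∂μ := by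
  have hneg : ∫ x, llr ρ μ x ∂μ = - ∫ x, llr μ ρ x ∂μ := by
    rw [← integral_neg]
    exact integral_congr_ae (neg_llr hac).symm
  have hintneg : Integrable (llr ρ μ) μ := by
    refine (integrable_congr (neg_llr hac)).mp hint.neg
  have hle : ∫ x, llr ρ μ x ∂μ ≤ ∫ x, ((ρ.rnDeriv μ x).toReal - 1) ∂μ := by
    refine integral_mono_ae hintneg ((Measure.integrable_toReal_rnDeriv).sub (integrable_const 1)) ?_
    filter_upwards [Measure.rnDeriv_pos' hac, Measure.rnDeriv_lt_top ρ μ] with x hpos hlt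
    have h1 : 0 < (ρ.rnDeriv μ x).toReal := ENNReal.toReal_pos hpos.ne' hlt.ne
    exact Real.log_le_sub_one_of_pos h1
  have h2 : ∫ x, ((ρ.rnDeriv μ x).toReal - 1) ∂μ ≤ 0 := by
    rw [integral_sub (Measure.integrable_toReal_rnDeriv) (integrable_const 1)]
    have h3 : ∫ x, (ρ.rnDeriv μ x).toReal ∂μ ≤ (ρ Set.univ).toReal := by
      rw [← setIntegral_univ]
      exact Measure.setIntegral_toReal_rnDeriv_le (measure_ne_top ρ _)
    simp only [integral_const, measureReal_def, measure_univ, ENNReal.toReal_one, smul_eq_mul, one_mul]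
    simp only [measure_univ, ENNReal.toReal_one] at h3
    linarith
  linarith [hle.trans h2, hneg]

/-- Donsker–Varadhan, upper-bound direction. -/
lemma integral_sub_log_integral_exp_le {α : Type*} [MeasurableSpace α] {μ ν : Measure α}
    [IsProbabilityMeasure μ] [IsProbabilityMeasure ν] (hac : μ ≪ ν)
    {f : α → ℝ} (hfμ : Integrable f μ) (hfπ : Integrable (fun x => Real.exp (f x)) ν)
    (hint : Integrable (llr μ ν) μ) :
    ∫ x, f x ∂μ ≤ ∫ x, llr μ ν x ∂μ + Real.log (∫ x, Real.exp (f x) ∂ν) := by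
  have hprob : IsProbabilityMeasure (ν.tilted f) := isProbabilityMeasure_tilted hfπ
  have hac2 : μ ≪ ν.tilted f := hac.trans (absolutelyContinuous_tilted hfπ)
  have hint2 : Integrable (llr μ (ν.tilted f)) μ :=
    integrable_llr_tilted_right hac hfμ hint hfπ
  have h0 : 0 ≤ ∫ x, llr μ (ν.tilted f) x ∂μ := integral_llr_nonneg' hac2 hint2
  rw [integral_llr_tilted_right hac hfμ hfπ hint] at h0
  linarith

/-- Product integral of a product function over `Measure.pi`. -/
lemma integral_pi_prod_eq_pow {Z : Type*} [MeasurableSpace Z] (D : Measure Z)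
    [IsProbabilityMeasure D] (m : ℕ) (g : Z → ℝ) :
    ∫ z : Fin m → Z, ∏ k : Fin m, g (z k) ∂(Measure.pi fun _ : Fin m => D)
      = (∫ x, g x ∂D) ^ m := by
  letI : MeasureSpace Z := ⟨D⟩
  haveI : SigmaFinite (volume : Measure Z) := (by infer_instance : SigmaFinite D)
  have hv : (Measure.pi fun _ : Fin m => D) = (volume : Measure (Fin m → Z)) :=
    (volume_pi).symm
  rw [hv]
  simpa [hv] using MeasureTheory.integral_fintype_prod_eq_pow (ι := Fin m) (μ := D) g

/-- One-sample Bernstein-type mgf bound for a `[0,1]`-valued function. -/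
lemma integral_exp_le_one_step {Z : Type*} [MeasurableSpace Z] (D : Measure Z)
    [IsProbabilityMeasure D] (g : Z → ℝ) (hmeas : Measurable g)
    (h0 : ∀ z, 0 ≤ g z) (h1 : ∀ z, g z ≤ 1) {lam : ℝ} (hl : 0 ≤ lam) :
    ∫ z, Real.exp (lam * ((∫ x, g x ∂D) - g z)) ∂D
      ≤ Real.exp (lam ^ 2 * (∫ x, g x ∂D) / 2) := by
  set c : ℝ := ∫ x, g x ∂D with hc
  have hgint : Integrable g D := by
    refine Integrable.mono' (integrable_const 1) hmeas.aestronglyMeasurable ?_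
    exact Filter.Eventually.of_forall fun z => by
      rw [Real.norm_eq_abs, abs_le]; exact ⟨by linarith [h0 z], h1 z⟩
  have hg2int : Integrable (fun z => g z ^ 2) D := by
    refine Integrable.mono' (integrable_const 1) (hmeas.pow_const 2).aestronglyMeasurable ?_
    exact Filter.Eventually.of_forall fun z => by
      rw [Real.norm_eq_abs, abs_le]
      constructor
      · nlinarith [h0 z, h1 z]
      · nlinarith [h0 z, h1 z]
  have hc0 : 0 ≤ c := integral_nonneg h0
  have hexpint : Integrable (fun z => Real.exp (-(lam * g z))) D := by
    refine Integrable.mono' (integrable_const 1) ?_ ?_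
    · exact (Real.measurable_exp.comp ((hmeas.const_mul lam).neg)).aestronglyMeasurable
    · refine Filter.Eventually.of_forall fun z => ?_
      rw [Real.norm_eq_abs, abs_of_pos (Real.exp_pos _)]
      rw [show (1 : ℝ) = Real.exp 0 by simp]
      exact Real.exp_le_exp.mpr (by nlinarith [h0 z])
  have key : ∫ z, Real.exp (-(lam * g z)) ∂D ≤ Real.exp (-(lam * c) + lam ^ 2 * c / 2) := by
    have step1 : ∫ z, Real.exp (-(lam * g z)) ∂D
        ≤ ∫ z, (1 - lam * g z + (lam * g z) ^ 2 / 2) ∂D := by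
      refine integral_mono hexpint ?_ ?_
      · exact ((integrable_const 1).sub (hgint.const_mul lam)).add
          (((hg2int.const_mul (lam ^ 2)).div_const 2).congr
            (Filter.Eventually.of_forall fun z => by ring))
      · intro z
        exact exp_neg_le_quadratic (by nlinarith [h0 z])
    have hI1 : Integrable (fun z : Z => 1 - lam * g z) D := by
      exact (integrable_const 1).sub (hgint.const_mul lam)
    have hI2 : Integrable (fun z : Z => (lam * g z) ^ 2 / 2) D := by
      have h := (hg2int.const_mul (lam ^ 2 / 2))
      refine h.congr (Filter.Eventually.of_forall fun z => ?_)
      ring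
    have step2 : ∫ z, (1 - lam * g z + (lam * g z) ^ 2 / 2) ∂D
        = 1 - lam * c + lam ^ 2 * (∫ z, g z ^ 2 ∂D) / 2 := by
      rw [integral_add hI1 hI2, integral_sub (integrable_const 1) (hgint.const_mul lam)]
      have e1 : ∫ z, lam * g z ∂D = lam * c := by rw [integral_const_mul]
      have e2 : ∫ z, (lam * g z) ^ 2 / 2 ∂D = lam ^ 2 * (∫ z, g z ^ 2 ∂D) / 2 := by
        rw [show (fun z : Z => (lam * g z) ^ 2 / 2) = (fun z : Z => lam ^ 2 / 2 * g z ^ 2) by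
          funext z; ring, integral_const_mul]
        ring
      simp only [integral_const, measureReal_def, measure_univ, ENNReal.toReal_one, smul_eq_mul, one_mul]
      rw [e1, e2]
    have step3 : ∫ z, g z ^ 2 ∂D ≤ c := by
      refine integral_mono hg2int hgint fun z => ?_
      nlinarith [h0 z, h1 z]
    have step4 : 1 - lam * c + lam ^ 2 * (∫ z, g z ^ 2 ∂D) / 2
        ≤ 1 + (-(lam * c) + lam ^ 2 * c / 2) := by nlinarith
    have step5 : 1 + (-(lam * c) + lam ^ 2 * c / 2)
        ≤ Real.exp (-(lam * c) + lam ^ 2 * c / 2) := by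
      linarith [Real.add_one_le_exp (-(lam * c) + lam ^ 2 * c / 2)]
    linarith
  calc ∫ z, Real.exp (lam * (c - g z)) ∂D
      = ∫ z, Real.exp (lam * c) * Real.exp (-(lam * g z)) ∂D := by
        congr 1; funext z; rw [← Real.exp_add]; ring_nf
    _ = Real.exp (lam * c) * ∫ z, Real.exp (-(lam * g z)) ∂D := integral_const_mul _ _
    _ ≤ Real.exp (lam * c) * Real.exp (-(lam * c) + lam ^ 2 * c / 2) := by
        exact mul_le_mul_of_nonneg_left key (Real.exp_pos _).le
    _ = Real.exp (lam ^ 2 * c / 2) := by rw [← Real.exp_add]; ring_nf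

/-- Product (i.i.d.) Bernstein-type mgf bound. -/
lemma integral_pi_exp_le_one {Z : Type*} [MeasurableSpace Z] (D : Measure Z)
    [IsProbabilityMeasure D] (g : Z → ℝ) (hmeas : Measurable g)
    (h0 : ∀ z, 0 ≤ g z) (h1 : ∀ z, g z ≤ 1) {lam : ℝ} (hl : 0 ≤ lam) (m : ℕ) :
    ∫ z : Fin m → Z,
        Real.exp ((∑ k : Fin m, lam * ((∫ x, g x ∂D) - g (z k)))
          - m * lam ^ 2 * (∫ x, g x ∂D) / 2) ∂(Measure.pi fun _ : Fin m => D) ≤ 1 := by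
  set c : ℝ := ∫ x, g x ∂D with hc
  set b : ℝ := m * lam ^ 2 * c / 2 with hb
  have hsplit : ∀ z : Fin m → Z,
      Real.exp ((∑ k : Fin m, lam * (c - g (z k))) - b)
        = (∏ k : Fin m, Real.exp (lam * (c - g (z k)))) * Real.exp (-b) := by
    intro z
    rw [← Real.exp_sum, ← Real.exp_add]
    congr 1
  calc ∫ z : Fin m → Z, Real.exp ((∑ k : Fin m, lam * (c - g (z k))) - b)
          ∂(Measure.pi fun _ : Fin m => D)
      = ∫ z : Fin m → Z, (∏ k : Fin m, Real.exp (lam * (c - g (z k)))) * Real.exp (-b)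
          ∂(Measure.pi fun _ : Fin m => D) := by
        exact integral_congr_ae (Filter.Eventually.of_forall hsplit)
    _ = (∫ z : Fin m → Z, ∏ k : Fin m, Real.exp (lam * (c - g (z k)))
          ∂(Measure.pi fun _ : Fin m => D)) * Real.exp (-b) := integral_mul_const _ _
    _ = (∫ x, Real.exp (lam * (c - g x)) ∂D) ^ m * Real.exp (-b) := by
        rw [integral_pi_prod_eq_pow D m (fun x => Real.exp (lam * (c - g x)))]
    _ ≤ (Real.exp (lam ^ 2 * c / 2)) ^ m * Real.exp (-b) := by
        refine mul_le_mul_of_nonneg_right ?_ (Real.exp_pos _).le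
        refine pow_le_pow_left₀ (integral_nonneg fun z => (Real.exp_pos _).le) ?_ m
        exact integral_exp_le_one_step D g hmeas h0 h1 hl
    _ = 1 := by
        rw [← Real.exp_nat_mul, ← Real.exp_add]
        simp [hb]
        ring_nf

set_option maxHeartbeats 2000000

/-- **PAC-Bayes-λ inequality** (Thiemann et al. 2017).
For a bounded measurable loss `ℓ` with values in `[0,1]`, a data distribution `D`,
a prior `π`, `ε > 0`, `lam ∈ (0,2)` and sample size `m ≥ 1`, with probability at least
`1 - ε` over i.i.d. samples from `D^⊗m` it holds simultaneously for all posterior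
probability measures `μ` (the Kullback–Leibler divergence being `+∞`, hence the bound
vacuous, unless `μ ≪ π` and the log-likelihood ratio is `μ`-integrable) that the
expected risk is bounded by the stated combination of expected empirical risk and
KL-complexity. -/
theorem pac_bayes_lambda
    {Θ Z : Type*} [MeasurableSpace Θ] [MeasurableSpace Z]
    (D : Measure Z) [IsProbabilityMeasure D]
    (ℓ : Θ → Z → ℝ) (hℓmeas : Measurable (Function.uncurry ℓ))
    (hℓbdd : ∀ θ z, 0 ≤ ℓ θ z ∧ ℓ θ z ≤ 1)
    (π : Measure Θ) [IsProbabilityMeasure π]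
    (ε : ℝ) (hε : 0 < ε)
    (lam : ℝ) (hlam : lam ∈ Set.Ioo (0 : ℝ) 2)
    (m : ℕ) (hm : 1 ≤ m) :
    (1 : ENNReal) - ENNReal.ofReal ε ≤
      (Measure.pi fun _ : Fin m => D)
        {z : Fin m → Z |
          ∀ μ : Measure Θ, IsProbabilityMeasure μ → μ ≪ π →
            Integrable (fun θ => Real.log (μ.rnDeriv π θ).toReal) μ →
            (∫ θ, (∫ x, ℓ θ x ∂D) ∂μ) ≤
              (∫ θ, ((m : ℝ)⁻¹ * ∑ k : Fin m, ℓ θ (z k)) ∂μ) / (1 - lam / 2) +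
                ((∫ θ, Real.log (μ.rnDeriv π θ).toReal ∂μ) +
                    Real.log (2 * Real.sqrt m / ε)) /
                  (m * lam * (1 - lam / 2))} := by
  obtain ⟨hlam0, hlam2⟩ := hlam
  have hm0 : (0 : ℝ) < m := by exact_mod_cast Nat.lt_of_lt_of_le Nat.zero_lt_one hm
  have hhalf : 0 < 1 - lam / 2 := by linarith
  set P : Measure (Fin m → Z) := Measure.pi fun _ : Fin m => D with hP
  set L : Θ → ℝ := fun θ => ∫ x, ℓ θ x ∂D with hLdef
  have hℓmeas1 : ∀ θ, Measurable (ℓ θ) := fun θ => hℓmeas.of_uncurry_left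
  have hℓint : ∀ θ, Integrable (ℓ θ) D := by
    intro θ
    refine (integrable_const (1 : ℝ)).mono' (hℓmeas1 θ).aestronglyMeasurable ?_
    exact Filter.Eventually.of_forall fun x => by
      rw [Real.norm_eq_abs, abs_le]
      exact ⟨by linarith [(hℓbdd θ x).1], (hℓbdd θ x).2⟩
  have hL0 : ∀ θ, 0 ≤ L θ := fun θ => integral_nonneg fun x => (hℓbdd θ x).1
  have hL1 : ∀ θ, L θ ≤ 1 := by
    intro θ
    have h := integral_mono (hℓint θ) (integrable_const (1 : ℝ)) fun x => (hℓbdd θ x).2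
    simpa using h
  have hLmeas : Measurable L := by
    have : StronglyMeasurable fun θ => ∫ x, ℓ θ x ∂D :=
      StronglyMeasurable.integral_prod_right' (hℓmeas.stronglyMeasurable)
    exact this.measurable
  -- The exponential-moment function
  set F : Θ → (Fin m → Z) → ℝ := fun θ z =>
    (∑ k : Fin m, lam * (L θ - ℓ θ (z k))) - m * lam ^ 2 * L θ / 2 with hFdef
  have hFbound : ∀ θ, ∫ z, Real.exp (F θ z) ∂P ≤ 1 := fun θ =>
    integral_pi_exp_le_one D (ℓ θ) (hℓmeas1 θ) (fun x => (hℓbdd θ x).1)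
      (fun x => (hℓbdd θ x).2) hlam0.le m
  have hFmeas : Measurable fun p : Θ × (Fin m → Z) => F p.1 p.2 := by
    have h1 : ∀ k : Fin m, Measurable fun p : Θ × (Fin m → Z) => ℓ p.1 (p.2 k) := fun k =>
      hℓmeas.comp (measurable_fst.prodMk ((measurable_pi_apply k).comp measurable_snd))
    have h2 : Measurable fun p : Θ × (Fin m → Z) =>
        ∑ k : Fin m, lam * (L p.1 - ℓ p.1 (p.2 k)) :=
      Finset.measurable_sum _ fun k _ =>
        (((hLmeas.comp measurable_fst).sub (h1 k)).const_mul lam)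
    exact h2.sub (((hLmeas.comp measurable_fst).const_mul (m * lam ^ 2)).div_const 2)
  have hFle : ∀ θ z, F θ z ≤ m * lam := by
    intro θ z
    have h1 : (∑ k : Fin m, lam * (L θ - ℓ θ (z k))) ≤ ∑ _k : Fin m, lam := by
      refine Finset.sum_le_sum fun k _ => ?_
      nlinarith [hL1 θ, (hℓbdd θ (z k)).1]
    have h2 : (∑ _k : Fin m, lam) = m * lam := by
      simp [Finset.sum_const, Finset.card_univ, mul_comm]
    have h3 : 0 ≤ (m : ℝ) * lam ^ 2 * L θ / 2 :=
      div_nonneg (mul_nonneg (mul_nonneg hm0.le (sq_nonneg lam)) (hL0 θ)) (by norm_num)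
    simp only [hFdef]
    linarith
  have hFge : ∀ θ z, -(m * lam) - m * lam ^ 2 / 2 ≤ F θ z := by
    intro θ z
    have h1 : (∑ _k : Fin m, -lam) ≤ ∑ k : Fin m, lam * (L θ - ℓ θ (z k)) := by
      refine Finset.sum_le_sum fun k _ => ?_
      nlinarith [hL0 θ, (hℓbdd θ (z k)).2]
    have h2 : (∑ _k : Fin m, -lam) = -(m * lam) := by
      simp [Finset.sum_const, Finset.card_univ, mul_comm]
    have h3 : (m : ℝ) * lam ^ 2 * L θ / 2 ≤ m * lam ^ 2 / 2 := by
      have hnn : 0 ≤ (m : ℝ) * lam ^ 2 := mul_nonneg hm0.le (sq_nonneg lam)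
      nlinarith [mul_le_mul_of_nonneg_left (hL1 θ) hnn]
    simp only [hFdef]
    linarith
  have hexpF_int : ∀ θ, Integrable (fun z => Real.exp (F θ z)) P := by
    intro θ
    refine (integrable_const (Real.exp (m * lam))).mono' ?_ ?_
    · exact (Real.measurable_exp.comp
        (hFmeas.comp (measurable_const.prodMk measurable_id))).aestronglyMeasurable
    · refine Filter.Eventually.of_forall fun z => ?_
      rw [Real.norm_eq_abs, abs_of_pos (Real.exp_pos _)]
      exact Real.exp_le_exp.mpr (hFle θ z)
  -- Tonelli
  have haemeas : AEMeasurable (Function.uncurry fun θ z => ENNReal.ofReal (Real.exp (F θ z)))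
      (π.prod P) :=
    (ENNReal.measurable_ofReal.comp (Real.measurable_exp.comp hFmeas)).aemeasurable
  set G : (Fin m → Z) → ENNReal := fun z => ∫⁻ θ, ENNReal.ofReal (Real.exp (F θ z)) ∂π
    with hGdef
  have hbase : Measurable fun p : Θ × (Fin m → Z) => ENNReal.ofReal (Real.exp (F p.1 p.2)) :=
    ENNReal.measurable_ofReal.comp (Real.measurable_exp.comp hFmeas)
  have hGmeas : Measurable G := Measurable.lintegral_prod_left' hbase
  have hTon : ∫⁻ z, G z ∂P ≤ 1 := by
    have hswap := lintegral_lintegral_swap (μ := π) (ν := P)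
      (f := fun θ z => ENNReal.ofReal (Real.exp (F θ z))) haemeas
    calc ∫⁻ z, G z ∂P = ∫⁻ θ, ∫⁻ z, ENNReal.ofReal (Real.exp (F θ z)) ∂P ∂π := hswap.symm
      _ ≤ ∫⁻ _, 1 ∂π := by
          refine lintegral_mono fun θ => ?_
          rw [← ofReal_integral_eq_lintegral_ofReal (hexpF_int θ)
            (Filter.Eventually.of_forall fun z => (Real.exp_pos _).le)]
          calc ENNReal.ofReal (∫ z, Real.exp (F θ z) ∂P)
              ≤ ENNReal.ofReal 1 := ENNReal.ofReal_le_ofReal (hFbound θ)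
            _ = 1 := ENNReal.ofReal_one
      _ = 1 := by simp
  -- Markov
  set c : ENNReal := ENNReal.ofReal (1 / ε) with hcdef
  have hc0 : c ≠ 0 := by
    simp only [hcdef, ne_eq, ENNReal.ofReal_eq_zero, not_le]
    positivity
  have hcT : c ≠ ⊤ := ENNReal.ofReal_ne_top
  have hbad : P {z | c ≤ G z} ≤ ENNReal.ofReal ε := by
    calc P {z | c ≤ G z} ≤ (∫⁻ z, G z ∂P) / c :=
        meas_ge_le_lintegral_div hGmeas.aemeasurable hc0 hcT
      _ ≤ 1 / c := ENNReal.div_le_div_right hTon c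
      _ = ENNReal.ofReal ε := by
          rw [hcdef, one_div, one_div, ENNReal.ofReal_inv_of_pos hε, inv_inv]
  -- from the bad-set bound to the good-set bound
  have hgood : (1 : ENNReal) - ENNReal.ofReal ε ≤ P {z | G z < c} := by
    have hunion : (1 : ENNReal) ≤ P {z | G z < c} + P {z | c ≤ G z} := by
      have hsub : (Set.univ : Set (Fin m → Z)) ⊆ {z | G z < c} ∪ {z | c ≤ G z} := by
        intro z _
        rcases lt_or_ge (G z) c with h | h
        · exact Or.inl h
        · exact Or.inr h
      calc (1 : ENNReal) = P Set.univ := measure_univ.symm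
        _ ≤ P ({z | G z < c} ∪ {z | c ≤ G z}) := measure_mono hsub
        _ ≤ P {z | G z < c} + P {z | c ≤ G z} := measure_union_le _ _
    rw [tsub_le_iff_right]
    exact hunion.trans (add_le_add_right hbad _)
  refine hgood.trans (measure_mono ?_)
  intro z hz
  intro μ hμprob hac hint
  haveI := hμprob
  -- notation for this fixed sample
  set f : Θ → ℝ := fun θ => F θ z with hfdef
  have hfmeas : Measurable f := hFmeas.comp (measurable_id.prodMk measurable_const)
  set Lm : Θ → ℝ := fun θ => (m : ℝ)⁻¹ * ∑ k : Fin m, ℓ θ (z k) with hLmdef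
  have hLm_meas : Measurable Lm := by
    have : Measurable fun θ => ∑ k : Fin m, ℓ θ (z k) :=
      Finset.measurable_sum _ fun k _ => hℓmeas.comp (measurable_id.prodMk measurable_const)
    exact this.const_mul _
  have hLm0 : ∀ θ, 0 ≤ Lm θ := fun θ =>
    mul_nonneg (inv_nonneg.mpr hm0.le) (Finset.sum_nonneg fun k _ => (hℓbdd θ (z k)).1)
  have hLm1 : ∀ θ, Lm θ ≤ 1 := by
    intro θ
    have hsum : ∑ k : Fin m, ℓ θ (z k) ≤ ∑ _k : Fin m, (1 : ℝ) :=
      Finset.sum_le_sum fun k _ => (hℓbdd θ (z k)).2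
    have hone : (∑ _k : Fin m, (1 : ℝ)) = m := by simp
    calc Lm θ ≤ (m : ℝ)⁻¹ * m := by
          refine mul_le_mul_of_nonneg_left ?_ (inv_nonneg.mpr hm0.le)
          rw [← hone]; exact hsum
      _ = 1 := inv_mul_cancel₀ hm0.ne'
  have hL_int : Integrable L μ := by
    refine (integrable_const (1 : ℝ)).mono' hLmeas.aestronglyMeasurable ?_
    exact Filter.Eventually.of_forall fun θ => by
      rw [Real.norm_eq_abs, abs_le]; exact ⟨by linarith [hL0 θ], hL1 θ⟩
  have hLm_int : Integrable Lm μ := by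
    refine (integrable_const (1 : ℝ)).mono' hLm_meas.aestronglyMeasurable ?_
    exact Filter.Eventually.of_forall fun θ => by
      rw [Real.norm_eq_abs, abs_le]; exact ⟨by linarith [hLm0 θ], hLm1 θ⟩
  have hf_eq : ∀ θ, f θ = m * lam * (L θ - Lm θ) - m * lam ^ 2 * L θ / 2 := by
    intro θ
    have h1 : ∑ k : Fin m, lam * (L θ - ℓ θ (z k))
        = (m : ℝ) * lam * L θ - lam * ∑ k : Fin m, ℓ θ (z k) := by
      simp only [mul_sub, Finset.sum_sub_distrib, Finset.sum_const, Finset.card_univ,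
        Fintype.card_fin, nsmul_eq_mul, Finset.mul_sum]
      ring
    simp only [hfdef, hFdef, hLmdef]
    rw [h1]
    field_simp
  have hf_int_μ : Integrable f μ := by
    refine (integrable_const ((m : ℝ) * lam + m * lam ^ 2 / 2)).mono'
      hfmeas.aestronglyMeasurable ?_
    refine Filter.Eventually.of_forall fun θ => ?_
    rw [Real.norm_eq_abs, abs_le]
    constructor
    · have h1 := hFge θ z
      have heq : -((m : ℝ) * lam + (m : ℝ) * lam ^ 2 / 2)
          = -((m : ℝ) * lam) - (m : ℝ) * lam ^ 2 / 2 := by ring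
      show -((m : ℝ) * lam + (m : ℝ) * lam ^ 2 / 2) ≤ f θ
      rw [heq]
      exact h1
    · show f θ ≤ (m : ℝ) * lam + (m : ℝ) * lam ^ 2 / 2
      exact (hFle θ z).trans (le_add_of_nonneg_right (by positivity))
  have hexp_int : Integrable (fun θ => Real.exp (f θ)) π := by
    refine (integrable_const (Real.exp ((m : ℝ) * lam))).mono'
      (Real.measurable_exp.comp hfmeas).aestronglyMeasurable ?_
    refine Filter.Eventually.of_forall fun θ => ?_
    rw [Real.norm_eq_abs, abs_of_pos (Real.exp_pos _)]
    exact Real.exp_le_exp.mpr (hFle θ z)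
  have hIpos : 0 < ∫ θ, Real.exp (f θ) ∂π := integral_exp_pos hexp_int
  have hGz : ENNReal.ofReal (∫ θ, Real.exp (f θ) ∂π) = G z :=
    ofReal_integral_eq_lintegral_ofReal hexp_int
      (Filter.Eventually.of_forall fun θ => (Real.exp_pos _).le)
  have hIle : ∫ θ, Real.exp (f θ) ∂π ≤ 1 / ε := by
    have h : G z < c := hz
    rw [← hGz, hcdef] at h
    exact ((ENNReal.ofReal_lt_ofReal_iff (by positivity)).mp h).le
  have hllr_int : Integrable (MeasureTheory.llr μ π) μ := hint
  have hdv := integral_sub_log_integral_exp_le hac hf_int_μ hexp_int hllr_int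
  have hsqrt1 : (1 : ℝ) ≤ Real.sqrt m := by
    rw [show (1 : ℝ) = Real.sqrt 1 by simp]
    exact Real.sqrt_le_sqrt (by exact_mod_cast hm)
  have hlogle : Real.log (∫ θ, Real.exp (f θ) ∂π) ≤ Real.log (2 * Real.sqrt m / ε) := by
    have h2 : (1 : ℝ) / ε ≤ 2 * Real.sqrt m / ε := by
      gcongr
      linarith
    calc Real.log (∫ θ, Real.exp (f θ) ∂π) ≤ Real.log (1 / ε) :=
        Real.log_le_log hIpos hIle
      _ ≤ Real.log (2 * Real.sqrt m / ε) :=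
        Real.log_le_log (by positivity) h2
  have hKLeq : ∫ x, MeasureTheory.llr μ π x ∂μ
      = ∫ θ, Real.log (μ.rnDeriv π θ).toReal ∂μ := rfl
  have hIf : ∫ θ, f θ ∂μ
      = m * lam * ((∫ θ, L θ ∂μ) - ∫ θ, Lm θ ∂μ) - m * lam ^ 2 * (∫ θ, L θ ∂μ) / 2 := by
    have h1 : Integrable (fun θ => (m : ℝ) * lam * (L θ - Lm θ)) μ := by
      exact (hL_int.sub hLm_int).const_mul _
    have h2 : Integrable (fun θ => (m : ℝ) * lam ^ 2 * L θ / 2) μ := by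
      exact (hL_int.const_mul _).div_const 2
    rw [integral_congr_ae (Filter.Eventually.of_forall hf_eq), integral_sub h1 h2,
      integral_const_mul, integral_sub hL_int hLm_int, integral_div, integral_const_mul,
      integral_const_mul]
  -- final algebra
  set IL : ℝ := ∫ θ, L θ ∂μ with hIL
  set ILm : ℝ := ∫ θ, Lm θ ∂μ with hILm
  set KL : ℝ := ∫ θ, Real.log (μ.rnDeriv π θ).toReal ∂μ with hKL
  set B : ℝ := Real.log (2 * Real.sqrt m / ε) with hB
  have hmain : (m : ℝ) * lam * (IL - ILm) - m * lam ^ 2 * IL / 2 ≤ KL + B := by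
    rw [← hIf]
    calc ∫ θ, f θ ∂μ ≤ (∫ x, MeasureTheory.llr μ π x ∂μ)
          + Real.log (∫ θ, Real.exp (f θ) ∂π) := hdv
      _ ≤ KL + B := by rw [hKLeq]; exact add_le_add_right hlogle _
  have hd : 0 < (m : ℝ) * lam * (1 - lam / 2) := mul_pos (mul_pos hm0 hlam0) hhalf
  have hkey : IL ≤ ((m : ℝ) * lam * ILm + (KL + B)) / ((m : ℝ) * lam * (1 - lam / 2)) := by
    rw [le_div_iff₀ hd]
    nlinarith [hmain]
  have hsplit : ((m : ℝ) * lam * ILm + (KL + B)) / ((m : ℝ) * lam * (1 - lam / 2))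
      = ILm / (1 - lam / 2) + (KL + B) / ((m : ℝ) * lam * (1 - lam / 2)) := by
    rw [add_div, mul_div_mul_left _ _ (ne_of_gt (mul_pos hm0 hlam0))]
  rw [hsplit] at hkey
  exact hkey
end

section
/- Let a ≥ 0 and b > 0 be real numbers. Then the function f : (0,2) → ℝ defined by f(λ) = a/(1−λ/2) + b/(λ(1−λ/2)) is quasiconvex on the open interval (0,2); that is, for all λ₁, λ₂ ∈ (0,2) and t ∈ [0,1], f(tλ₁ + (1−t)λ₂) ≤ max(f(λ₁), f(λ₂)). -/
private lemma inv_convex_aux (x y t : ℝ) (hx : 0 < x) (hy : 0 < y)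
    (ht0 : 0 ≤ t) (ht1 : t ≤ 1) :
    1 / (t * x + (1 - t) * y) ≤ t / x + (1 - t) / y := by
  have hm : 0 < t * x + (1 - t) * y := by
    rcases lt_min hx hy with hmin
    nlinarith [min_le_left x y, min_le_right x y]
  rw [div_add_div _ _ hx.ne' hy.ne', div_le_div_iff₀ hm (by positivity)]
  nlinarith [mul_nonneg (mul_nonneg ht0 (by linarith : (0:ℝ) ≤ 1 - t)) (sq_nonneg (x - y))]

/-- The function `λ ↦ a/(1 − λ/2) + b/(λ(1 − λ/2))` (the right-hand side of the
PAC-Bayes-λ bound as a function of the trade-off parameter `λ`) is quasiconvex on the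
open interval `(0, 2)`, for any `a ≥ 0` and `b > 0`. -/
theorem pac_bayes_lambda_bound_quasiconvex (a b : ℝ) (ha : 0 ≤ a) (hb : 0 < b) :
    ∀ l₁ ∈ Set.Ioo (0 : ℝ) 2, ∀ l₂ ∈ Set.Ioo (0 : ℝ) 2, ∀ t ∈ Set.Icc (0 : ℝ) 1,
      a / (1 - (t * l₁ + (1 - t) * l₂) / 2) +
          b / ((t * l₁ + (1 - t) * l₂) * (1 - (t * l₁ + (1 - t) * l₂) / 2)) ≤
        max (a / (1 - l₁ / 2) + b / (l₁ * (1 - l₁ / 2)))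
          (a / (1 - l₂ / 2) + b / (l₂ * (1 - l₂ / 2))) := by
  rintro l₁ ⟨h1a, h1b⟩ l₂ ⟨h2a, h2b⟩ t ⟨ht0, ht1⟩
  set μ := t * l₁ + (1 - t) * l₂ with hμdef
  have hs0 : (0:ℝ) ≤ 1 - t := by linarith
  -- denominators
  have hd1 : 0 < 1 - l₁ / 2 := by linarith
  have hd2 : 0 < 1 - l₂ / 2 := by linarith
  have hμ0 : 0 < μ := by
    have := min_le_left l₁ l₂; have := min_le_right l₁ l₂
    have := lt_min h1a h2a
    nlinarith
  have hμ2 : μ < 2 := by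
    have := min_le_left (2 - l₁) (2 - l₂)
    have := min_le_right (2 - l₁) (2 - l₂)
    have := lt_min (by linarith : (0:ℝ) < 2 - l₁) (by linarith : (0:ℝ) < 2 - l₂)
    nlinarith
  have hdμ : 0 < 1 - μ / 2 := by linarith
  have heμ : 0 < μ * (1 - μ / 2) := by positivity
  have he1 : 0 < l₁ * (1 - l₁ / 2) := by positivity
  have he2 : 0 < l₂ * (1 - l₂ / 2) := by positivity
  -- first term: 1/(1-μ/2) ≤ t/(1-l₁/2) + (1-t)/(1-l₂/2)
  have key1 : 1 / (1 - μ / 2) ≤ t / (1 - l₁/2) + (1 - t) / (1 - l₂/2) := by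
    have h := inv_convex_aux (1 - l₁/2) (1 - l₂/2) t hd1 hd2 ht0 ht1
    have : t * (1 - l₁/2) + (1 - t) * (1 - l₂/2) = 1 - μ / 2 := by ring
    rwa [this] at h
  -- second term: concavity of e(λ) = λ(1-λ/2)
  have hconc : t * (l₁ * (1 - l₁/2)) + (1 - t) * (l₂ * (1 - l₂/2)) ≤ μ * (1 - μ/2) := by
    nlinarith [mul_nonneg (mul_nonneg ht0 hs0) (sq_nonneg (l₁ - l₂))]
  have hcomb : 0 < t * (l₁ * (1 - l₁/2)) + (1 - t) * (l₂ * (1 - l₂/2)) := by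
    have := min_le_left (l₁ * (1 - l₁/2)) (l₂ * (1 - l₂/2))
    have := min_le_right (l₁ * (1 - l₁/2)) (l₂ * (1 - l₂/2))
    have := lt_min he1 he2
    nlinarith
  have key2 : 1 / (μ * (1 - μ/2)) ≤ t / (l₁ * (1 - l₁/2)) + (1 - t) / (l₂ * (1 - l₂/2)) := by
    calc 1 / (μ * (1 - μ/2))
        ≤ 1 / (t * (l₁ * (1 - l₁/2)) + (1 - t) * (l₂ * (1 - l₂/2))) := by
          apply one_div_le_one_div_of_le hcomb hconc
      _ ≤ t / (l₁ * (1 - l₁/2)) + (1 - t) / (l₂ * (1 - l₂/2)) :=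
          inv_convex_aux _ _ t he1 he2 ht0 ht1
  -- combine
  set f₁ := a / (1 - l₁ / 2) + b / (l₁ * (1 - l₁ / 2)) with hf1
  set f₂ := a / (1 - l₂ / 2) + b / (l₂ * (1 - l₂ / 2)) with hf2
  have hconv : a / (1 - μ / 2) + b / (μ * (1 - μ / 2)) ≤ t * f₁ + (1 - t) * f₂ := by
    have h1 : a / (1 - μ / 2) ≤ a * (t / (1 - l₁/2) + (1 - t) / (1 - l₂/2)) := by
      rw [div_eq_mul_one_div a]
      exact mul_le_mul_of_nonneg_left key1 ha
    have h2 : b / (μ * (1 - μ/2)) ≤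
        b * (t / (l₁ * (1 - l₁/2)) + (1 - t) / (l₂ * (1 - l₂/2))) := by
      rw [div_eq_mul_one_div b]
      exact mul_le_mul_of_nonneg_left key2 hb.le
    have : t * f₁ + (1 - t) * f₂ =
        a * (t / (1 - l₁/2) + (1 - t) / (1 - l₂/2)) +
        b * (t / (l₁ * (1 - l₁/2)) + (1 - t) / (l₂ * (1 - l₂/2))) := by
      rw [hf1, hf2]; ring
    linarith
  have hmax : t * f₁ + (1 - t) * f₂ ≤ max f₁ f₂ := by
    have h1 := mul_le_mul_of_nonneg_left (le_max_left f₁ f₂) ht0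
    have h2 := mul_le_mul_of_nonneg_left (le_max_right f₁ f₂) hs0
    nlinarith
  exact hconv.trans hmax
end
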